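/- Let Q and H be symmetric positive definite d×d matrices with H ⪯ Q ⪯ ηH for some η ≥ 1, and let u ∈ ℝᵈ with (Q−H)u ≠ 0. Then the SR1 update Q⁺ = SR1(Q,H,u) also satisfies H ⪯ Q⁺ ⪯ ηH. -/

import Mathlib

open Matrix

/-- The SR1 (symmetric rank-one) update. -/
noncomputable def SR1 {d : ℕ} (Q H : Matrix (Fin d) (Fin d) ℝ) (u : Fin d → ℝ) :
    Matrix (Fin d) (Fin d) ℝ :=
  Q - (u ⬝ᵥ (Q - H).mulVec u)⁻¹ • vecMulVec ((Q - H).mulVec u) ((Q - H).mulVec u)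

/-- Cauchy–Schwarz for a real PSD matrix. -/
lemma psd_cauchy_schwarz {d : ℕ} (A : Matrix (Fin d) (Fin d) ℝ) (hA : A.PosSemidef)
    (x u : Fin d → ℝ) :
    (x ⬝ᵥ A.mulVec u) * (x ⬝ᵥ A.mulVec u) ≤ (x ⬝ᵥ A.mulVec x) * (u ⬝ᵥ A.mulVec u) := by
  have hAT : Aᵀ = A := by
    have := hA.1
    simpa [Matrix.IsHermitian, conjTranspose_eq_transpose_of_trivial] using this
  have hsymm : ∀ y z : Fin d → ℝ, y ⬝ᵥ A.mulVec z = z ⬝ᵥ A.mulVec y := by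
    intro y z
    rw [dotProduct_mulVec, ← mulVec_transpose, hAT, dotProduct_comm]
  have key : ∀ t : ℝ, 0 ≤ (u ⬝ᵥ A.mulVec u) * (t * t) + (2 * (x ⬝ᵥ A.mulVec u)) * t
      + x ⬝ᵥ A.mulVec x := by
    intro t
    have h := hA.dotProduct_mulVec_nonneg (x + t • u)
    simp only [star_trivial] at h
    rw [mulVec_add, mulVec_smul, dotProduct_add, add_dotProduct, add_dotProduct,
      dotProduct_smul, smul_dotProduct, smul_dotProduct, dotProduct_smul] at h
    have h2 := hsymm u x
    simp only [smul_eq_mul] at h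
    rw [h2] at h
    nlinarith [h]
  have hd := discrim_le_zero key
  rw [discrim] at hd
  nlinarith [hd]

/-- the SR1 update preserves the sandwich H ⪯ Q ⪯ ηH. -/
theorem sr1_preserves_sandwich {d : ℕ} (Q H : Matrix (Fin d) (Fin d) ℝ) (u : Fin d → ℝ)
    (η : ℝ) (hη : 1 ≤ η)
    (hQ : Q.PosDef) (hH : H.PosDef)
    (hQH : (Q - H).PosSemidef) (hηH : (η • H - Q).PosSemidef)
    (hu : (Q - H).mulVec u ≠ 0) :
    (SR1 Q H u - H).PosSemidef ∧ (η • H - SR1 Q H u).PosSemidef := by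
  set A := Q - H with hA
  set v := A.mulVec u with hv
  set α := u ⬝ᵥ v with hαdef
  have hαpos : 0 < α := by
    rcases (hQH.dotProduct_mulVec_nonneg u).lt_or_eq with h | h
    · simpa using h
    · exfalso
      apply hu
      rw [← hQH.dotProduct_mulVec_zero_iff]
      exact h.symm
  have hvv : ∀ x : Fin d → ℝ, x ⬝ᵥ (vecMulVec v v).mulVec x = (x ⬝ᵥ v) * (x ⬝ᵥ v) := by
    intro x
    simp only [dotProduct, mulVec, vecMulVec_apply, Finset.mul_sum, Finset.sum_mul]
    rw [Finset.sum_comm]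
    congr 1; ext i; congr 1; ext j; ring
  have hvvherm : (vecMulVec v v).IsHermitian := by
    ext i j
    simp [vecMulVec_apply, mul_comm]
  have hSR1 : SR1 Q H u = Q - α⁻¹ • vecMulVec v v := rfl
  have hsm : (α⁻¹ • vecMulVec v v).IsHermitian := by
    ext i j
    simp [conjTranspose_apply, vecMulVec_apply, mul_comm]
  constructor
  · refine PosSemidef.of_dotProduct_mulVec_nonneg ?_ ?_
    · rw [hSR1]
      have heq0 : Q - α⁻¹ • vecMulVec v v - H = A - α⁻¹ • vecMulVec v v := by
        rw [hA]; abel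
      rw [heq0]
      exact hQH.1.sub hsm
    · intro x
      have hcs := psd_cauchy_schwarz A hQH x u
      have hxA := hQH.dotProduct_mulVec_nonneg x
      simp only [star_trivial] at hxA ⊢
      have heq : Q - α⁻¹ • vecMulVec v v - H = A - α⁻¹ • vecMulVec v v := by
        rw [hA]; abel
      rw [hSR1, heq, sub_mulVec, dotProduct_sub, smul_mulVec, dotProduct_smul,
        hvv x, smul_eq_mul]
      have hxv : x ⬝ᵥ v = x ⬝ᵥ A.mulVec u := rfl
      have : α⁻¹ * ((x ⬝ᵥ v) * (x ⬝ᵥ v)) ≤ x ⬝ᵥ A.mulVec x := by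
        rw [inv_mul_le_iff₀ hαpos, hxv]
        calc (x ⬝ᵥ A.mulVec u) * (x ⬝ᵥ A.mulVec u)
            ≤ (x ⬝ᵥ A.mulVec x) * (u ⬝ᵥ A.mulVec u) := hcs
          _ = α * (x ⬝ᵥ A.mulVec x) := by rw [hαdef, hv, mul_comm]
      linarith
  · have heq : η • H - SR1 Q H u = (η • H - Q) + α⁻¹ • vecMulVec v v := by
      rw [hSR1]; abel
    rw [heq]
    refine hηH.add ?_
    refine PosSemidef.of_dotProduct_mulVec_nonneg ?_ ?_
    · exact hsm
    · intro x
      simp only [star_trivial, smul_mulVec, dotProduct_smul, hvv x, smul_eq_mul]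
      exact mul_nonneg (inv_nonneg.mpr hαpos.le) (mul_self_nonneg _)
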